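/- Let g ≥ 2 and let d, d' be integers, with G_d := gcd(d − g + 1, 2g − 2) and G_{d'} := gcd(d' − g + 1, 2g − 2). Then G_d = G_{d'} if and only if a stable vine curve of genus g is d-special exactly when it is d'-special (i.e., the set of d-special triples (g₁, g₂, k) equals the set of d'-special triples). -/

import Mathlib

/-- `(g₁, g₂, k)` encodes a stable vine curve of genus `g`: two smooth irreducible
components of genera `g₁, g₂` meeting in `k` nodes. -/
def StableVine (g g₁ g₂ k : ℤ) : Prop :=
  0 ≤ g₁ ∧ 0 ≤ g₂ ∧ 1 ≤ k ∧ g = g₁ + g₂ + k - 1 ∧ ((g₁ = 0 ∨ g₂ = 0) → 3 ≤ k)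

/-- The Basic Inequality for a component of `ω`-degree `w`, with `k` nodes, on a curve of
genus `g`, for total degree `d` and partial degree `e`. -/
def BasicIneq (g d k w e : ℤ) : Prop :=
  (d : ℚ) * w / (2 * g - 2) - k / 2 ≤ e ∧ (e : ℚ) ≤ (d : ℚ) * w / (2 * g - 2) + k / 2

/-- The strict version of the Basic Inequality. -/
def BasicIneqStrict (g d k w e : ℤ) : Prop :=
  (d : ℚ) * w / (2 * g - 2) - k / 2 < e ∧ (e : ℚ) < (d : ℚ) * w / (2 * g - 2) + k / 2

/-- `(e₁, e₂)` is a balanced multidegree of total degree `d` on the vine curve `(g₁, g₂, k)`. -/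
def IsBalanced (g d g₁ g₂ k e₁ e₂ : ℤ) : Prop :=
  e₁ + e₂ = d ∧ BasicIneq g d k (2 * g₁ - 2 + k) e₁ ∧ BasicIneq g d k (2 * g₂ - 2 + k) e₂

/-- `(e₁, e₂)` is a stably balanced multidegree of total degree `d` on `(g₁, g₂, k)`. -/
def IsStablyBalanced (g d g₁ g₂ k e₁ e₂ : ℤ) : Prop :=
  e₁ + e₂ = d ∧ BasicIneqStrict g d k (2 * g₁ - 2 + k) e₁ ∧
    BasicIneqStrict g d k (2 * g₂ - 2 + k) e₂

/-- The vine curve `(g₁, g₂, k)` is `d`-special: it admits a balanced multidegree of total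
degree `d` which is not stably balanced. -/
def DSpecial (g d g₁ g₂ k : ℤ) : Prop :=
  ∃ e₁ e₂ : ℤ, IsBalanced g d g₁ g₂ k e₁ e₂ ∧ ¬ IsStablyBalanced g d g₁ g₂ k e₁ e₂

lemma basicIneq_iff (g d k w e : ℤ) (hg : 2 ≤ g) :
    BasicIneq g d k w e ↔
      2*d*w - k*(2*g-2) ≤ 2*(2*g-2)*e ∧ 2*(2*g-2)*e ≤ 2*d*w + k*(2*g-2) := by
  have hgq : (2:ℚ) ≤ (g:ℚ) := by exact_mod_cast hg
  have hn : (0:ℚ) < 2*(g:ℚ) - 2 := by linarith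
  constructor
  · rintro ⟨h1, h2⟩
    rw [sub_le_iff_le_add, div_le_iff₀ hn] at h1
    rw [← sub_le_iff_le_add, le_div_iff₀ hn] at h2
    constructor
    · have : (2*(d:ℚ)*w - k*(2*g-2) : ℚ) ≤ 2*(2*(g:ℚ)-2)*e := by nlinarith
      exact_mod_cast this
    · have : (2*(2*(g:ℚ)-2)*e : ℚ) ≤ 2*(d:ℚ)*w + k*(2*g-2) := by nlinarith
      exact_mod_cast this
  · rintro ⟨h1, h2⟩
    have H1 : (2*(d:ℚ)*w - k*(2*g-2) : ℚ) ≤ 2*(2*(g:ℚ)-2)*e := by exact_mod_cast h1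
    have H2 : (2*(2*(g:ℚ)-2)*e : ℚ) ≤ 2*(d:ℚ)*w + k*(2*g-2) := by exact_mod_cast h2
    constructor
    · rw [sub_le_iff_le_add, div_le_iff₀ hn]; nlinarith
    · rw [← sub_le_iff_le_add, le_div_iff₀ hn]; nlinarith

lemma basicIneqStrict_iff (g d k w e : ℤ) (hg : 2 ≤ g) :
    BasicIneqStrict g d k w e ↔
      2*d*w - k*(2*g-2) < 2*(2*g-2)*e ∧ 2*(2*g-2)*e < 2*d*w + k*(2*g-2) := by
  have hgq : (2:ℚ) ≤ (g:ℚ) := by exact_mod_cast hg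
  have hn : (0:ℚ) < 2*(g:ℚ) - 2 := by linarith
  constructor
  · rintro ⟨h1, h2⟩
    rw [sub_lt_iff_lt_add, div_lt_iff₀ hn] at h1
    rw [← sub_lt_iff_lt_add, lt_div_iff₀ hn] at h2
    constructor
    · have : (2*(d:ℚ)*w - k*(2*g-2) : ℚ) < 2*(2*(g:ℚ)-2)*e := by nlinarith
      exact_mod_cast this
    · have : (2*(2*(g:ℚ)-2)*e : ℚ) < 2*(d:ℚ)*w + k*(2*g-2) := by nlinarith
      exact_mod_cast this
  · rintro ⟨h1, h2⟩
    have H1 : (2*(d:ℚ)*w - k*(2*g-2) : ℚ) < 2*(2*(g:ℚ)-2)*e := by exact_mod_cast h1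
    have H2 : (2*(2*(g:ℚ)-2)*e : ℚ) < 2*(d:ℚ)*w + k*(2*g-2) := by exact_mod_cast h2
    constructor
    · rw [sub_lt_iff_lt_add, div_lt_iff₀ hn]; nlinarith
    · rw [← sub_lt_iff_lt_add, lt_div_iff₀ hn]; nlinarith

lemma dSpecial_iff (g d g₁ g₂ k : ℤ) (hg : 2 ≤ g) (hsv : StableVine g g₁ g₂ k) :
    DSpecial g d g₁ g₂ k ↔ (2*g-2) ∣ (d - g + 1) * (2*g₁ - 2 + k) := by
  obtain ⟨hg1, hg2, hk, hsum, _⟩ := hsv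
  have cancel2 : ∀ x y : ℤ, 2*x ∣ 2*y → x ∣ y := fun x y h =>
    (mul_dvd_mul_iff_left (two_ne_zero (α := ℤ))).mp h
  constructor
  · rintro ⟨e₁, e₂, ⟨hse, hb1, hb2⟩, hns⟩
    rw [basicIneq_iff _ _ _ _ _ hg] at hb1 hb2
    have hns' : ¬(BasicIneqStrict g d k (2*g₁-2+k) e₁ ∧ BasicIneqStrict g d k (2*g₂-2+k) e₂) :=
      fun h => hns ⟨hse, h.1, h.2⟩
    have conv : (2*g-2) ∣ (d - g + 1) * (2*g₂ - 2 + k) →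
        (2*g-2) ∣ (d - g + 1) * (2*g₁ - 2 + k) := by
      rintro ⟨c, hc⟩
      exact ⟨(d - g + 1) - c, by linear_combination -hc - 2*(d-g+1)*hsum⟩
    rcases not_and_or.mp hns' with h | h
    · rw [basicIneqStrict_iff _ _ _ _ _ hg, not_and_or] at h
      rcases h with h | h <;> push_neg at h
      · have heq : 2*(2*g-2)*e₁ = 2*d*(2*g₁-2+k) - k*(2*g-2) := le_antisymm h hb1.1
        exact cancel2 _ _ ⟨e₁ - g₁ + 1, by linear_combination -heq⟩
      · have heq : 2*(2*g-2)*e₁ = 2*d*(2*g₁-2+k) + k*(2*g-2) := le_antisymm hb1.2 h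
        exact cancel2 _ _ ⟨e₁ - g₁ + 1 - k, by linear_combination -heq⟩
    · rw [basicIneqStrict_iff _ _ _ _ _ hg, not_and_or] at h
      rcases h with h | h <;> push_neg at h
      · have heq : 2*(2*g-2)*e₂ = 2*d*(2*g₂-2+k) - k*(2*g-2) := le_antisymm h hb2.1
        exact conv (cancel2 _ _ ⟨e₂ - g₂ + 1, by linear_combination -heq⟩)
      · have heq : 2*(2*g-2)*e₂ = 2*d*(2*g₂-2+k) + k*(2*g-2) := le_antisymm hb2.2 h
        exact conv (cancel2 _ _ ⟨e₂ - g₂ + 1 - k, by linear_combination -heq⟩)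
  · rintro ⟨c, hc⟩
    refine ⟨c + g₁ - 1 + k, d - (c + g₁ - 1 + k), ?_, ?_⟩
    · have heq1 : 2*(2*g-2)*(c + g₁ - 1 + k) = 2*d*(2*g₁-2+k) + k*(2*g-2) := by
        linear_combination -2*hc
      have heq2 : 2*(2*g-2)*(d - (c + g₁ - 1 + k)) = 2*d*(2*g₂-2+k) - k*(2*g-2) := by
        linear_combination 2*hc + 4*d*hsum
      have hkn : 0 ≤ k*(2*g-2) := mul_nonneg (by omega) (by omega)
      refine ⟨by ring, ?_, ?_⟩
      · rw [basicIneq_iff _ _ _ _ _ hg]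
        constructor <;> linarith
      · rw [basicIneq_iff _ _ _ _ _ hg]
        constructor <;> linarith
    · rintro ⟨-, hstr, -⟩
      rw [basicIneqStrict_iff _ _ _ _ _ hg] at hstr
      have heq1 : 2*(2*g-2)*(c + g₁ - 1 + k) = 2*d*(2*g₁-2+k) + k*(2*g-2) := by
        linear_combination -2*hc
      linarith [hstr.2]

lemma dvd_mul_iff_gcd (D n w : ℤ) (hn : n ≠ 0) :
    n ∣ D * w ↔ n ∣ (Int.gcd D n : ℤ) * w := by
  set G : ℤ := (Int.gcd D n : ℤ) with hGdef
  have hG0 : G ≠ 0 := by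
    simp only [hGdef, ne_eq, Int.natCast_eq_zero, Int.gcd_eq_zero_iff]
    exact fun (h : D = 0 ∧ n = 0) => hn h.2
  obtain ⟨a, ha⟩ : G ∣ D := Int.gcd_dvd_left _ _
  obtain ⟨b, hb⟩ : G ∣ n := Int.gcd_dvd_right _ _
  have hcop : IsCoprime a b := by
    have hpos : 0 < Int.gcd D n := Nat.pos_of_ne_zero (by
      simp only [ne_eq, Int.gcd_eq_zero_iff]
      exact fun h => hn h.2)
    have := Int.gcd_div_gcd_div_gcd hpos
    rw [Int.isCoprime_iff_gcd_eq_one]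
    have ha' : D / G = a := by rw [ha]; exact Int.mul_ediv_cancel_left a hG0
    have hb' : n / G = b := by rw [hb]; exact Int.mul_ediv_cancel_left b hG0
    rwa [ha', hb'] at this
  constructor
  · rintro h
    rw [ha, hb] at h
    rw [mul_assoc] at h
    have h' : b ∣ a * w := (mul_dvd_mul_iff_left hG0).mp h
    have : b ∣ w := (hcop.symm).dvd_of_dvd_mul_left h'
    rw [hb]
    exact mul_dvd_mul_left G this
  · rintro ⟨c, hc⟩
    exact ⟨a * c, by rw [ha]; linear_combination a * hc⟩

lemma realize_w (g w : ℤ) (hg : 2 ≤ g) (h1 : 1 ≤ w) (h2 : w ≤ 2*g - 3) :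
    ∃ g₁ g₂ k : ℤ, StableVine g g₁ g₂ k ∧ 2*g₁ - 2 + k = w := by
  rcases Int.even_or_odd w with ⟨t, ht⟩ | ⟨t, ht⟩
  · exact ⟨t, g - t - 1, 2, ⟨by omega, by omega, by omega, by omega, by omega⟩, by omega⟩
  · exact ⟨t + 1, g - t - 1, 1, ⟨by omega, by omega, by omega, by omega, by omega⟩, by omega⟩

/-- Corollary 2.13 (vine-curve form): `G_d = G_{d'}` iff the `d`-special and `d'`-special
stable vine curves of genus `g` coincide. -/
theorem stmt_2 (g d d' : ℤ) (hg : 2 ≤ g) :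
    Int.gcd (d - g + 1) (2 * g - 2) = Int.gcd (d' - g + 1) (2 * g - 2) ↔
      ∀ g₁ g₂ k : ℤ, StableVine g g₁ g₂ k →
        (DSpecial g d g₁ g₂ k ↔ DSpecial g d' g₁ g₂ k) := by
  have hn0 : (2*g - 2) ≠ 0 := by omega
  constructor
  · intro hgcd g₁ g₂ k hsv
    rw [dSpecial_iff g d g₁ g₂ k hg hsv, dSpecial_iff g d' g₁ g₂ k hg hsv,
        dvd_mul_iff_gcd (d - g + 1) _ _ hn0, dvd_mul_iff_gcd (d' - g + 1) _ _ hn0, hgcd]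
  · intro H
    have claim : ∀ e e' : ℤ,
        (∀ g₁ g₂ k : ℤ, StableVine g g₁ g₂ k →
          ((2*g-2) ∣ (e - g + 1) * (2*g₁-2+k) → (2*g-2) ∣ (e' - g + 1) * (2*g₁-2+k))) →
        Int.gcd (e - g + 1) (2*g-2) ∣ Int.gcd (e' - g + 1) (2*g-2) := by
      intro e e' himp
      set G : ℕ := Int.gcd (e - g + 1) (2*g-2) with hGdef
      by_cases hG1 : G = 1
      · rw [hG1]; exact one_dvd _
      have hGn : (G:ℤ) ∣ (2*g-2) := Int.gcd_dvd_right _ _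
      have hGD : (G:ℤ) ∣ (e - g + 1) := Int.gcd_dvd_left _ _
      have hGpos : 0 < G := Nat.pos_of_ne_zero (by
        intro h0
        have := Int.gcd_eq_zero_iff.mp (hGdef ▸ h0)
        omega)
      have hG2 : 2 ≤ (G:ℤ) := by exact_mod_cast (by omega : 2 ≤ G)
      obtain ⟨t, hGt⟩ := hGn
      have ht1 : 1 ≤ t := by nlinarith
      have ht2 : t ≤ 2*g - 3 := by nlinarith
      obtain ⟨g₁, g₂, k, hsv, hw⟩ := realize_w g t hg ht1 ht2
      have hd1 : (2*g-2) ∣ (e - g + 1) * (2*g₁-2+k) := by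
        obtain ⟨a, ha⟩ := hGD
        rw [hw]
        exact ⟨a, by rw [ha, hGt]; ring⟩
      have hd2 := himp g₁ g₂ k hsv hd1
      rw [hw] at hd2
      obtain ⟨c, hc⟩ := hd2
      have ht0 : t ≠ 0 := by omega
      have hdvd : (e' - g + 1) = (G:ℤ) * c := by
        have h' : (e' - g + 1) * t = ((G:ℤ) * c) * t := by rw [hc, hGt]; ring
        exact mul_right_cancel₀ ht0 h'
      have : (G:ℤ) ∣ (Int.gcd (e' - g + 1) (2*g-2) : ℤ) := Int.dvd_coe_gcd ⟨c, hdvd⟩ (Int.gcd_dvd_right _ _)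
      exact_mod_cast this
    refine Nat.dvd_antisymm (claim d d' ?_) (claim d' d ?_) <;>
      intro g₁ g₂ k hsv hdvd
    · exact (dSpecial_iff g d' g₁ g₂ k hg hsv).mp
        ((H g₁ g₂ k hsv).mp ((dSpecial_iff g d g₁ g₂ k hg hsv).mpr hdvd))
    · exact (dSpecial_iff g d g₁ g₂ k hg hsv).mp
        ((H g₁ g₂ k hsv).mpr ((dSpecial_iff g d' g₁ g₂ k hg hsv).mpr hdvd))
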